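/- Let ℓ ∈ ℕ, ℓ ≥ 1, and let E ⊆ ℝ^ℓ be a set of ℓ-dimensional Lebesgue (outer) measure zero. Then there exists a unit vector v₀ ∈ ℝ^ℓ such that the set {t ∈ ℝ : t·v₀ ∈ E} has one-dimensional Lebesgue measure zero. -/

import Mathlib

open Set MeasureTheory

/-- **Almost every ray misses a Lebesgue-null set.** If `E ⊆ ℝ^ℓ` has `ℓ`-dimensional
Lebesgue (outer) measure zero, then there is a unit vector `v₀` such that
`{t ∈ ℝ : t • v₀ ∈ E}` has one-dimensional Lebesgue measure zero. -/
theorem exists_unit_vector_line_null (ℓ : ℕ) (hl : 1 ≤ ℓ)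
    (E : Set (EuclideanSpace ℝ (Fin ℓ))) (hE : volume E = 0) :
    ∃ v₀ : EuclideanSpace ℝ (Fin ℓ), ‖v₀‖ = 1 ∧
      volume {t : ℝ | t • v₀ ∈ E} = 0 := by
  haveI : Nonempty (Fin ℓ) := ⟨⟨0, hl⟩⟩
  haveI : Nontrivial (EuclideanSpace ℝ (Fin ℓ)) := by
    refine ⟨EuclideanSpace.single (⟨0, hl⟩ : Fin ℓ) 1, 0, ?_⟩
    intro h
    have := congrArg (fun x : EuclideanSpace ℝ (Fin ℓ) => x (⟨0, hl⟩ : Fin ℓ)) h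
    simp [EuclideanSpace.single_apply] at this
  set μ : Measure ℝ := volume with hμ
  set ν : Measure (EuclideanSpace ℝ (Fin ℓ)) := volume with hν
  -- replace E with a measurable null superset
  obtain ⟨F, hEF, hFmeas, hF⟩ := exists_measurable_superset_of_null hE
  -- the "bad" product set, with t ≠ 0
  set A : Set (ℝ × EuclideanSpace ℝ (Fin ℓ)) :=
    {p : ℝ × EuclideanSpace ℝ (Fin ℓ) | p.1 • p.2 ∈ F ∧ p.1 ≠ 0} with hA
  have hAmeas : MeasurableSet A := by
    apply MeasurableSet.inter
    · exact (measurable_fst.smul measurable_snd) hFmeas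
    · exact (isClosed_singleton.measurableSet.compl.preimage measurable_fst)
  -- slices in the `t` direction are null
  have hprod : μ.prod ν A = 0 := by
    rw [Measure.measure_prod_null hAmeas]
    filter_upwards with t
    simp only [Pi.zero_apply]
    rcases eq_or_ne t 0 with rfl | ht
    · have : Prod.mk (0:ℝ) ⁻¹' A = ∅ := by ext v; simp [A]
      rw [this, measure_empty]
    · have : Prod.mk t ⁻¹' A = (t • ·) ⁻¹' F := by
        ext v; simp [A, ht]
      rw [this, Measure.addHaar_preimage_smul ν ht, hF, mul_zero]
  -- swap: slices in the `v` direction are a.e. null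
  set B : Set (EuclideanSpace ℝ (Fin ℓ) × ℝ) :=
    {p : EuclideanSpace ℝ (Fin ℓ) × ℝ | p.2 • p.1 ∈ F ∧ p.2 ≠ 0} with hB
  have hBmeas : MeasurableSet B := by
    apply MeasurableSet.inter
    · exact (measurable_snd.smul measurable_fst) hFmeas
    · exact (isClosed_singleton.measurableSet.compl.preimage measurable_snd)
  have hswap : Prod.swap ⁻¹' B = A := by ext p; simp [A, B]
  have hBnull : ν.prod μ B = 0 := by
    rw [← Measure.prod_swap, Measure.map_apply measurable_swap hBmeas, hswap, hprod]
  rw [Measure.measure_prod_null hBmeas] at hBnull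
  -- the set of good nonzero vectors has full measure, so is nonempty
  have hne : ({v : EuclideanSpace ℝ (Fin ℓ) | μ (Prod.mk v ⁻¹' B) = 0} ∩ {0}ᶜ).Nonempty := by
    by_contra h
    rw [not_nonempty_iff_eq_empty, ← subset_empty_iff, ← compl_univ,
      subset_compl_comm, compl_inter, compl_compl] at h
    have hle : ν univ ≤ ν ({v : EuclideanSpace ℝ (Fin ℓ) | μ (Prod.mk v ⁻¹' B) = 0}ᶜ ∪ {0}) :=
      measure_mono h
    have h1 : ν ({v : EuclideanSpace ℝ (Fin ℓ) | μ (Prod.mk v ⁻¹' B) = 0}ᶜ) = 0 := by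
      have h' : ∀ᵐ x ∂ν, μ (Prod.mk x ⁻¹' B) = 0 := by
        filter_upwards [hBnull] with x hx using hx
      have h'' := ae_iff.mp h'
      simpa [compl_setOf] using h''
    have h2 : ν ({0} : Set (EuclideanSpace ℝ (Fin ℓ))) = 0 := measure_singleton 0
    have hz : ν univ = 0 := by
      refine le_antisymm (hle.trans ?_) zero_le
      calc ν ({v : EuclideanSpace ℝ (Fin ℓ) | μ (Prod.mk v ⁻¹' B) = 0}ᶜ ∪ {0})
          ≤ ν ({v : EuclideanSpace ℝ (Fin ℓ) | μ (Prod.mk v ⁻¹' B) = 0}ᶜ)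
            + ν ({0} : Set (EuclideanSpace ℝ (Fin ℓ))) := measure_union_le _ _
        _ = 0 := by rw [h1, h2, add_zero]
    exact (NeZero.ne (ν univ)) hz
  obtain ⟨v, hv, hv0⟩ := hne
  have hv0' : v ≠ 0 := hv0
  have hvnorm : ‖v‖ ≠ 0 := norm_ne_zero_iff.mpr hv0'
  refine ⟨‖v‖⁻¹ • v, ?_, ?_⟩
  · rw [norm_smul, norm_inv, norm_norm, inv_mul_cancel₀ hvnorm]
  · have hsub : {t : ℝ | t • (‖v‖⁻¹ • v) ∈ E} ⊆
        ((‖v‖⁻¹ * ·) ⁻¹' {s : ℝ | s • v ∈ F ∧ s ≠ 0}) ∪ {0} := by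
      intro t ht
      rcases eq_or_ne t 0 with rfl | ht0
      · exact Or.inr rfl
      · left
        simp only [mem_preimage, mem_setOf_eq]
        refine ⟨?_, mul_ne_zero (inv_ne_zero hvnorm) ht0⟩
        have heq : (‖v‖⁻¹ * t) • v = t • (‖v‖⁻¹ • v) := by
          rw [smul_smul, mul_comm]
        rw [heq]; exact hEF ht
    have hS : μ {s : ℝ | s • v ∈ F ∧ s ≠ 0} = 0 := by
      have h' : Prod.mk v ⁻¹' B = {s : ℝ | s • v ∈ F ∧ s ≠ 0} := by
        ext s; simp [B]
      rw [← h']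
      exact hv
    have hkey : μ ((‖v‖⁻¹ * ·) ⁻¹' {s : ℝ | s • v ∈ F ∧ s ≠ 0}) = 0 := by
      have heq : ((‖v‖⁻¹ * ·) : ℝ → ℝ) = (‖v‖⁻¹ • ·) := by
        ext s; simp [smul_eq_mul]
      rw [heq, Measure.addHaar_preimage_smul μ (inv_ne_zero hvnorm), hS, mul_zero]
    refine measure_mono_null hsub ?_
    refine le_antisymm ((measure_union_le _ _).trans ?_) zero_le
    rw [hkey, measure_singleton, add_zero]
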